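/- Let R be a commutative ring such that the essential annihilating-ideal graph EG(R) has finite clique number and Z(R) = Nil(R). Then Nil(R) is a finitely generated (hence nilpotent) ideal. -/

import Mathlib

/-- An ideal is essential if it intersects every nonzero ideal nontrivially. -/
def IsEssentialIdeal (R : Type*) [CommRing R] (E : Ideal R) : Prop :=
  ∀ J : Ideal R, J ≠ ⊥ → E ⊓ J ≠ ⊥

/-- Vertices of the essential annihilating-ideal graph: nonzero ideals with
nonzero annihilator. -/
def AnnVertex (R : Type*) [CommRing R] : Type _ :=
  {I : Ideal R // I ≠ ⊥ ∧ Submodule.annihilator I ≠ ⊥}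

/-- The essential annihilating-ideal graph `EG(R)`. -/
def EG (R : Type*) [CommRing R] : SimpleGraph (AnnVertex R) where
  Adj I J := I ≠ J ∧ IsEssentialIdeal R (Submodule.annihilator (I.1 * J.1))
  symm := by
    constructor
    intro I J h
    refine ⟨h.1.symm, ?_⟩
    rw [mul_comm]
    exact h.2
  loopless := by constructor; intro I h; exact h.1 rfl

lemma exists_pow_kill {R : Type*} [CommRing R] (a z : R) (ha : a ≠ 0) (hz : IsNilpotent z) :
    ∃ m, a * z ^ m ≠ 0 ∧ a * z ^ (m + 1) = 0 := by
  classical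
  obtain ⟨n, hn⟩ := hz
  have hex : ∃ m, a * z ^ m = 0 := ⟨n, by rw [hn, mul_zero]⟩
  have hspec := Nat.find_spec hex
  have hk0 : Nat.find hex ≠ 0 := fun h => ha (by simpa [h] using hspec)
  refine ⟨Nat.find hex - 1, Nat.find_min hex (Nat.pred_lt hk0), ?_⟩
  rwa [Nat.sub_add_cancel (Nat.pos_of_ne_zero hk0)]

lemma essential_ann_of_nilpotent {R : Type*} [CommRing R] (z : R) (hz : IsNilpotent z) :
    IsEssentialIdeal R (Submodule.annihilator (Ideal.span {z})) := by
  intro J hJ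
  obtain ⟨a, haJ, ha⟩ := Submodule.exists_mem_ne_zero_of_ne_bot hJ
  obtain ⟨m, hb, hb0⟩ := exists_pow_kill a z ha hz
  rw [Submodule.ne_bot_iff]
  refine ⟨a * z ^ m, ?_, hb⟩
  refine Submodule.mem_inf.mpr ⟨?_, Ideal.mul_mem_right _ _ haJ⟩
  exact (Submodule.mem_annihilator_span_singleton _ _).mpr
    (by simpa [smul_eq_mul, mul_assoc, pow_succ] using hb0)

lemma vertex_cond {R : Type*} [CommRing R] (x : R) (hx : IsNilpotent x) (hx0 : x ≠ 0) :
    (Ideal.span {x} : Ideal R) ≠ ⊥ ∧ Submodule.annihilator (Ideal.span {x} : Ideal R) ≠ ⊥ := by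
  constructor
  · simpa [Ideal.span_singleton_eq_bot] using hx0
  · obtain ⟨m, hb, hb0⟩ := exists_pow_kill x x hx0 hx
    rw [Submodule.ne_bot_iff]
    refine ⟨x * x ^ m, ?_, hb⟩
    exact (Submodule.mem_annihilator_span_singleton _ _).mpr
      (by simpa [smul_eq_mul, mul_assoc, pow_succ, mul_comm, mul_left_comm] using hb0)

def mkVertex {R : Type*} [CommRing R] (x : R) (hx : IsNilpotent x) (hx0 : x ≠ 0) :
    AnnVertex R :=
  Subtype.mk (Ideal.span {x}) (vertex_cond x hx hx0)

theorem nilradical_fg_of_finite_clique_and_zeroDivisors_eq_nilradical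
    {R : Type*} [CommRing R]
    (hclique : ∃ n : ℕ, ∀ s : Finset (AnnVertex R), (EG R).IsClique ↑s → s.card ≤ n)
    (hZ : {x : R | ∃ y : R, y ≠ 0 ∧ x * y = 0} = {x : R | IsNilpotent x}) :
    (nilradical R).FG := by
  classical
  set C : Set (AnnVertex R) :=
    {v | ∃ x : R, IsNilpotent x ∧ x ≠ 0 ∧ v.1 = Ideal.span {x}} with hCdef
  -- C is a clique
  have hcl : (EG R).IsClique C := by
    intro v hv w hw hvw
    obtain ⟨x, hx, hx0, hvx⟩ := hv
    obtain ⟨y, hy, hy0, hwy⟩ := hw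
    refine ⟨hvw, ?_⟩
    rw [hvx, hwy, Ideal.span_singleton_mul_span_singleton]
    exact essential_ann_of_nilpotent _ ((Commute.all x y).isNilpotent_mul_right hx)
  -- C is finite
  have hCfin : C.Finite := by
    by_contra hinf
    have hinf' : C.Infinite := hinf
    obtain ⟨n, hn⟩ := hclique
    obtain ⟨t, ht, htc⟩ := hinf'.exists_subset_card_eq (n + 1)
    have := hn t (hcl.subset ht)
    omega
  -- choose generators
  have hg : ∀ v ∈ C, ∃ x : R, IsNilpotent x ∧ x ≠ 0 ∧ v.1 = Ideal.span {x} := fun v hv => hv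
  set g : AnnVertex R → R := fun v =>
    if h : ∃ x : R, IsNilpotent x ∧ x ≠ 0 ∧ v.1 = Ideal.span {x} then h.choose else 0 with hgdef
  have hgspec : ∀ v ∈ C, IsNilpotent (g v) ∧ g v ≠ 0 ∧ v.1 = Ideal.span {g v} := by
    intro v hv
    have h : ∃ x : R, IsNilpotent x ∧ x ≠ 0 ∧ v.1 = Ideal.span {x} := hv
    simp only [hgdef, dif_pos h]
    exact h.choose_spec
  refine Submodule.fg_def.mpr ⟨g '' C, hCfin.image g, ?_⟩
  refine le_antisymm ?_ ?_
  · rw [Submodule.span_le]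
    rintro _ ⟨v, hv, rfl⟩
    exact mem_nilradical.mpr (hgspec v hv).1
  · intro x hx
    have hxn : IsNilpotent x := mem_nilradical.mp hx
    by_cases hx0 : x = 0
    · simp [hx0]
    · have hvC : mkVertex x hxn hx0 ∈ C := ⟨x, hxn, hx0, rfl⟩
      obtain ⟨hgn, hg0, hgeq⟩ := hgspec _ hvC
      have : x ∈ Ideal.span {g (mkVertex x hxn hx0)} := by
        rw [← hgeq]; exact Ideal.subset_span rfl
      exact Submodule.span_mono (Set.singleton_subset_iff.mpr (Set.mem_image_of_mem g hvC)) this
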